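/- Let (W_{ij})_{i,j∈ℕ, i≠j} be synaptic weights with c_i := ∑_{j≠i} 2^{−j}·|W_{ij}| < ∞, let (φ_i)_{i∈ℕ} be nonnegative nondecreasing functions on [0,∞), g : [0,∞) → [0,∞), k₁ > 0 and a_i ≥ 0 such that for all i and all t ≥ s ≥ 0: φ_i(t) − φ_i(s) ≤ g(t) − g(s) (W2), g(t) − g(s) ≥ k₁·(t − s) (W3), and s·(φ_i(t) − φ_i(s)) ≤ φ_i(t)·(t − s) (W4). Assume δ := inf_i (a_i − 2^i·c_i) > 0. For x, y : ℕ → [0,∞) define H(x,y) = ∑_i 2^{−i}·|x_i − y_i|, define Δ_i(x)_j = max(x_j + W_{ij}, 0) for j ≠ i and Δ_i(x)_i = 0, and define G(x,y) = ∑_i a_i·2^{−i}·[(−1)^{1+𝟙{x_i<y_i}}·g(x_i) + (−1)^{1+𝟙{y_i<x_i}}·g(y_i)] + ∑_i min(φ_i(x_i), φ_i(y_i))·(H(Δ_i(x), Δ_i(y)) − H(x,y)) + ∑_i max(φ_i(x_i) − φ_i(y_i), 0)·(H(Δ_i(x), y) − H(x,y)) + ∑_i max(φ_i(y_i) − φ_i(x_i),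 0)·(H(x, Δ_i(y)) − H(x,y)). Then, for all x, y for which all the series above converge absolutely, G(x,y) ≤ −k₁·δ·H(x,y). -/
import Mathlib


/- STATEMENT 6: the core contraction estimate 𝓛₂H ≤ −k₁·δ·H of Theorem 2.3
(Wasserstein contraction). -/

/-- The weighted ℓ¹-distance H(x,y) = ∑ᵢ 2^{−i}·|xᵢ − yᵢ|. -/
noncomputable def Hdist (x y : ℕ → ℝ) : ℝ :=
  ∑' i : ℕ, ((2 : ℝ) ^ i)⁻¹ * |x i - y i|

/-- The jump map Δᵢ: the spiking neuron i is reset to 0 and every other neuron j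
receives the synaptic weight W i j, truncated at 0. -/
noncomputable def jumpMap (W : ℕ → ℕ → ℝ) (i : ℕ) (x : ℕ → ℝ) : ℕ → ℝ :=
  fun j => if j = i then 0 else max (x j + W i j) 0

lemma Hdist_symm (x y : ℕ → ℝ) : Hdist x y = Hdist y x :=
  tsum_congr fun i => by rw [abs_sub_comm]

lemma aux_abs_max (u v w : ℝ) (hv : 0 ≤ v) : |max (u + w) 0 - v| ≤ |u - v| + |w| := by
  rcases le_or_gt (u + w) 0 with h | h
  · rw [max_eq_right h, zero_sub, abs_neg, abs_of_nonneg hv]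
    have h1 := neg_abs_le (u - v)
    have h2 := neg_abs_le w
    linarith
  · rw [max_eq_left h.le]
    have : u + w - v = (u - v) + w := by ring
    rw [this]
    exact abs_add_le _ _

lemma jump_jump_le (W : ℕ → ℕ → ℝ) (x y : ℕ → ℝ) (i : ℕ)
    (hH : Summable (fun j : ℕ => ((2:ℝ)^j)⁻¹ * |x j - y j|))
    (hΔ : Summable (fun j : ℕ => ((2:ℝ)^j)⁻¹ * |jumpMap W i x j - jumpMap W i y j|)) :
    Hdist (jumpMap W i x) (jumpMap W i y) ≤ Hdist x y - ((2:ℝ)^i)⁻¹ * |x i - y i| := by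
  have hpt : ∀ j, ((2:ℝ)^j)⁻¹ * |jumpMap W i x j - jumpMap W i y j|
      ≤ (if j = i then 0 else ((2:ℝ)^j)⁻¹ * |x j - y j|) := by
    intro j
    by_cases hj : j = i
    · simp [jumpMap, hj]
    · rw [if_neg hj]
      refine mul_le_mul_of_nonneg_left ?_ (by positivity)
      simp only [jumpMap, if_neg hj]
      calc |max (x j + W i j) 0 - max (y j + W i j) 0|
          ≤ |(x j + W i j) - (y j + W i j)| := abs_max_sub_max_le_abs _ _ _
        _ = |x j - y j| := by ring_nf
  have hsum2 : Summable (fun j => if j = i then 0 else ((2:ℝ)^j)⁻¹ * |x j - y j|) := by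
    refine Summable.of_nonneg_of_le (fun j => ?_) (fun j => ?_) hH
    · split <;> positivity
    · split
      · positivity
      · exact le_refl _
  have hle := Summable.tsum_le_tsum hpt hΔ hsum2
  have heq := Summable.tsum_eq_add_tsum_ite hH i
  unfold Hdist
  linarith [hle, heq]

lemma jump_left_le (W : ℕ → ℕ → ℝ) (x y : ℕ → ℝ) (i : ℕ) (ci : ℝ)
    (hy : ∀ j, 0 ≤ y j)
    (hH : Summable (fun j : ℕ => ((2:ℝ)^j)⁻¹ * |x j - y j|))
    (hΔ : Summable (fun j : ℕ => ((2:ℝ)^j)⁻¹ * |jumpMap W i x j - y j|))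
    (hc_sum : Summable (fun j : {j : ℕ // j ≠ i} => ((2:ℝ)^(j.1:ℕ))⁻¹ * |W i j.1|))
    (hc : ci = ∑' j : {j : ℕ // j ≠ i}, ((2:ℝ)^(j.1:ℕ))⁻¹ * |W i j.1|) :
    Hdist (jumpMap W i x) y ≤ Hdist x y - ((2:ℝ)^i)⁻¹ * |x i - y i| + ((2:ℝ)^i)⁻¹ * y i + ci := by
  set f : ℕ → ℝ := fun j => ((2:ℝ)^j)⁻¹ * |x j - y j| with hf
  set fw : ℕ → ℝ := fun j => ((2:ℝ)^j)⁻¹ * |W i j| with hfw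
  have hgw_eq : (fun j => if j = i then 0 else fw j) = Set.indicator {j | j ≠ i} fw := by
    ext j; by_cases hj : j = i <;> simp [Set.indicator, hj]
  have hgw_sum : Summable (fun j => if j = i then 0 else fw j) := by
    rw [hgw_eq]
    exact summable_subtype_iff_indicator.mp hc_sum
  have hgf_sum : Summable (fun j => if j = i then 0 else f j) := by
    refine Summable.of_nonneg_of_le (fun j => ?_) (fun j => ?_) hH
    · split
      · exact le_refl _
      · positivity
    · split
      · positivity
      · exact le_refl _
  have hgy_sum : Summable (fun j => if j = i then ((2:ℝ)^i)⁻¹ * y i else 0) :=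
    (hasSum_ite_eq i (((2:ℝ)^i)⁻¹ * y i)).summable
  have hpt : ∀ j, ((2:ℝ)^j)⁻¹ * |jumpMap W i x j - y j|
      ≤ (if j = i then 0 else f j) + ((if j = i then 0 else fw j)
        + (if j = i then ((2:ℝ)^i)⁻¹ * y i else 0)) := by
    intro j
    by_cases hj : j = i
    · subst hj
      simp [jumpMap, zero_sub, abs_neg, abs_of_nonneg (hy j)]
    · simp only [if_neg hj, add_zero]
      have : jumpMap W i x j = max (x j + W i j) 0 := by simp [jumpMap, hj]
      rw [this, hf, hfw]
      have h1 := aux_abs_max (x j) (y j) (W i j) (hy j)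
      have hp : (0:ℝ) ≤ ((2:ℝ)^j)⁻¹ := by positivity
      calc ((2:ℝ)^j)⁻¹ * |max (x j + W i j) 0 - y j|
          ≤ ((2:ℝ)^j)⁻¹ * (|x j - y j| + |W i j|) := mul_le_mul_of_nonneg_left h1 hp
        _ = ((2:ℝ)^j)⁻¹ * |x j - y j| + ((2:ℝ)^j)⁻¹ * |W i j| := by ring
  have hle := Summable.tsum_le_tsum hpt hΔ (hgf_sum.add (hgw_sum.add hgy_sum))
  rw [Summable.tsum_add hgf_sum (hgw_sum.add hgy_sum), Summable.tsum_add hgw_sum hgy_sum] at hle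
  have hA : (∑' j, if j = i then 0 else f j) = (∑' j, f j) - f i := by
    have := Summable.tsum_eq_add_tsum_ite hH i
    linarith
  have hB : (∑' j, if j = i then 0 else fw j) = ci := by
    rw [hgw_eq, ← tsum_subtype]
    exact hc.symm
  have hC : (∑' j, if j = i then ((2:ℝ)^i)⁻¹ * y i else 0) = ((2:ℝ)^i)⁻¹ * y i :=
    (hasSum_ite_eq i _).tsum_eq
  rw [hA, hB, hC] at hle
  have hHd : Hdist x y = ∑' j, f j := rfl
  have hfi : f i = ((2:ℝ)^i)⁻¹ * |x i - y i| := rfl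
  have hΔd : Hdist (jumpMap W i x) y
      = ∑' j, ((2:ℝ)^j)⁻¹ * |jumpMap W i x j - y j| := rfl
  rw [hHd, hΔd]
  linarith [hle, hfi]

lemma key_scalar (p ci av δ k₁ s t φs φt gs gt E F : ℝ)
    (hp : 0 < p) (hci : 0 ≤ ci) (hst : s ≤ t)
    (hφs : 0 ≤ φs) (hφ : φs ≤ φt)
    (hE : E ≤ -(p * (t - s)))
    (hF : F ≤ p * s - p * (t - s) + ci)
    (hW4 : s * (φt - φs) ≤ φt * (t - s))
    (hW2 : φt - φs ≤ gt - gs)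
    (hW3 : k₁ * (t - s) ≤ gt - gs)
    (hk : 0 < k₁) (hδ : 0 ≤ δ) (hδa : p * δ ≤ p * av - ci) :
    av * p * (gs - gt) + φs * E + (φt - φs) * F ≤ -(k₁ * δ) * (p * (t - s)) := by
  have hd : 0 ≤ t - s := by linarith
  have h1 : φs * E ≤ φs * (-(p * (t - s))) := mul_le_mul_of_nonneg_left hE hφs
  have h2 : (φt - φs) * F ≤ (φt - φs) * (p * s - p * (t - s) + ci) :=
    mul_le_mul_of_nonneg_left hF (by linarith)
  have h3 : p * (s * (φt - φs)) ≤ p * (φt * (t - s)) := mul_le_mul_of_nonneg_left hW4 hp.le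
  have h4 : (φt - φs) * ci ≤ (gt - gs) * ci := mul_le_mul_of_nonneg_right hW2 hci
  have h5 : φs * E + (φt - φs) * F ≤ (gt - gs) * ci := by nlinarith [h1, h2, h3, h4]
  have hgt0 : 0 ≤ gt - gs := le_trans (by positivity) hW3
  have h6 : k₁ * (t - s) * (p * δ) ≤ (gt - gs) * (p * av - ci) :=
    mul_le_mul hW3 hδa (by positivity) hgt0
  nlinarith [h5, h6]


theorem coupling_generator_contraction
    (W : ℕ → ℕ → ℝ) (φ : ℕ → ℝ → ℝ) (g : ℝ → ℝ) (k₁ : ℝ) (a c : ℕ → ℝ) (δ : ℝ)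
    (hφ_nonneg : ∀ i t, 0 ≤ t → 0 ≤ φ i t)
    (hφ_mono : ∀ i, MonotoneOn (φ i) (Set.Ici 0))
    (hg_nonneg : ∀ t, 0 ≤ t → 0 ≤ g t)
    (hk₁ : 0 < k₁)
    (ha : ∀ i, 0 ≤ a i)
    (hW2 : ∀ i s t, 0 ≤ s → s ≤ t → φ i t - φ i s ≤ g t - g s)
    (hW3 : ∀ s t, 0 ≤ s → s ≤ t → k₁ * (t - s) ≤ g t - g s)
    (hW4 : ∀ i s t, 0 ≤ s → s ≤ t → s * (φ i t - φ i s) ≤ φ i t * (t - s))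
    (hc_sum : ∀ i, Summable (fun j : {j : ℕ // j ≠ i} => ((2 : ℝ) ^ (j.1 : ℕ))⁻¹ * |W i j.1|))
    (hc : ∀ i, c i = ∑' j : {j : ℕ // j ≠ i}, ((2 : ℝ) ^ (j.1 : ℕ))⁻¹ * |W i j.1|)
    (hδ : δ = ⨅ i : ℕ, (a i - 2 ^ i * c i))
    (hδ_pos : 0 < δ) :
    ∀ x y : ℕ → ℝ, (∀ i, 0 ≤ x i) → (∀ i, 0 ≤ y i) →
      Summable (fun i : ℕ => ((2 : ℝ) ^ i)⁻¹ * |x i - y i|) →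
      (∀ i, Summable (fun j : ℕ => ((2 : ℝ) ^ j)⁻¹ * |jumpMap W i x j - jumpMap W i y j|)) →
      (∀ i, Summable (fun j : ℕ => ((2 : ℝ) ^ j)⁻¹ * |jumpMap W i x j - y j|)) →
      (∀ i, Summable (fun j : ℕ => ((2 : ℝ) ^ j)⁻¹ * |x j - jumpMap W i y j|)) →
      Summable (fun i : ℕ =>
        |a i * ((2 : ℝ) ^ i)⁻¹ *
          ((if x i < y i then (1 : ℝ) else -1) * g (x i) +
           (if y i < x i then (1 : ℝ) else -1) * g (y i))|) →
      Summable (fun i : ℕ =>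
        |min (φ i (x i)) (φ i (y i)) * (Hdist (jumpMap W i x) (jumpMap W i y) - Hdist x y)|) →
      Summable (fun i : ℕ =>
        |max (φ i (x i) - φ i (y i)) 0 * (Hdist (jumpMap W i x) y - Hdist x y)|) →
      Summable (fun i : ℕ =>
        |max (φ i (y i) - φ i (x i)) 0 * (Hdist x (jumpMap W i y) - Hdist x y)|) →
      (∑' i : ℕ, a i * ((2 : ℝ) ^ i)⁻¹ *
          ((if x i < y i then (1 : ℝ) else -1) * g (x i) +
           (if y i < x i then (1 : ℝ) else -1) * g (y i)))
      + (∑' i : ℕ, min (φ i (x i)) (φ i (y i)) *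
          (Hdist (jumpMap W i x) (jumpMap W i y) - Hdist x y))
      + (∑' i : ℕ, max (φ i (x i) - φ i (y i)) 0 *
          (Hdist (jumpMap W i x) y - Hdist x y))
      + (∑' i : ℕ, max (φ i (y i) - φ i (x i)) 0 *
          (Hdist x (jumpMap W i y) - Hdist x y))
      ≤ -(k₁ * δ) * Hdist x y := by
  intro x y hx hy hH hΔΔ hΔy hxΔ hS1 hS2 hS3 hS4
  set f1 : ℕ → ℝ := fun i => a i * ((2 : ℝ) ^ i)⁻¹ *
          ((if x i < y i then (1 : ℝ) else -1) * g (x i) +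
           (if y i < x i then (1 : ℝ) else -1) * g (y i)) with hf1
  set f2 : ℕ → ℝ := fun i => min (φ i (x i)) (φ i (y i)) *
          (Hdist (jumpMap W i x) (jumpMap W i y) - Hdist x y) with hf2
  set f3 : ℕ → ℝ := fun i => max (φ i (x i) - φ i (y i)) 0 *
          (Hdist (jumpMap W i x) y - Hdist x y) with hf3
  set f4 : ℕ → ℝ := fun i => max (φ i (y i) - φ i (x i)) 0 *
          (Hdist x (jumpMap W i y) - Hdist x y) with hf4
  have h1 : Summable f1 := hS1.of_abs
  have h2 : Summable f2 := hS2.of_abs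
  have h3 : Summable f3 := hS3.of_abs
  have h4 : Summable f4 := hS4.of_abs
  -- bounded below
  have hbdd : BddBelow (Set.range fun i : ℕ => a i - 2 ^ i * c i) := by
    by_contra h
    rw [Real.iInf_of_not_bddBelow h] at hδ
    linarith [hδ_pos, hδ.symm ▸ hδ_pos]
  have hH' : Summable (fun j : ℕ => ((2:ℝ)^j)⁻¹ * |y j - x j|) :=
    hH.congr (fun j => by rw [abs_sub_comm])
  -- per index bound
  have hBdd : ∀ i, f1 i + f2 i + f3 i + f4 i
      ≤ -(k₁ * δ) * (((2:ℝ)^i)⁻¹ * |x i - y i|) := by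
    intro i
    have hp : (0:ℝ) < ((2:ℝ)^i)⁻¹ := by positivity
    have hci0 : 0 ≤ c i := by
      rw [hc i]; exact tsum_nonneg (fun j => by positivity)
    have hδle : δ ≤ a i - 2 ^ i * c i := by
      rw [hδ]; exact ciInf_le hbdd i
    have h2i : ((2:ℝ)^i)⁻¹ * ((2:ℝ)^i * c i) = c i := by
      field_simp
    have hδa : ((2:ℝ)^i)⁻¹ * δ ≤ ((2:ℝ)^i)⁻¹ * a i - c i := by
      calc ((2:ℝ)^i)⁻¹ * δ ≤ ((2:ℝ)^i)⁻¹ * (a i - 2 ^ i * c i) :=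
            mul_le_mul_of_nonneg_left hδle hp.le
        _ = ((2:ℝ)^i)⁻¹ * a i - ((2:ℝ)^i)⁻¹ * ((2:ℝ)^i * c i) := by ring
        _ = ((2:ℝ)^i)⁻¹ * a i - c i := by rw [h2i]
    have hEle := jump_jump_le W x y i hH (hΔΔ i)
    rcases lt_trichotomy (x i) (y i) with hlt | heq | hgt
    · -- x i < y i
      have hφle : φ i (x i) ≤ φ i (y i) := hφ_mono i (hx i) (hy i) hlt.le
      have habs : |x i - y i| = y i - x i := by rw [abs_sub_comm]; exact abs_of_nonneg (by linarith)
      have hE : Hdist (jumpMap W i x) (jumpMap W i y) - Hdist x y ≤ -(((2:ℝ)^i)⁻¹ * (y i - x i)) := by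
        rw [habs] at hEle; linarith
      have hFle := jump_left_le W y x i (c i) hx hH' (((hxΔ i)).congr (fun j => by rw [abs_sub_comm])) (hc_sum i) (hc i)
      have hF : Hdist x (jumpMap W i y) - Hdist x y
          ≤ ((2:ℝ)^i)⁻¹ * x i - ((2:ℝ)^i)⁻¹ * (y i - x i) + c i := by
        rw [Hdist_symm (jumpMap W i y) x, Hdist_symm y x] at hFle
        have : |y i - x i| = y i - x i := abs_of_nonneg (by linarith)
        rw [this] at hFle
        linarith
      have key := key_scalar (((2:ℝ)^i)⁻¹) (c i) (a i) δ k₁ (x i) (y i)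
        (φ i (x i)) (φ i (y i)) (g (x i)) (g (y i))
        (Hdist (jumpMap W i x) (jumpMap W i y) - Hdist x y)
        (Hdist x (jumpMap W i y) - Hdist x y)
        hp hci0 hlt.le (hφ_nonneg i (x i) (hx i)) hφle hE hF
        (hW4 i (x i) (y i) (hx i) hlt.le) (hW2 i (x i) (y i) (hx i) hlt.le)
        (hW3 (x i) (y i) (hx i) hlt.le) hk₁ hδ_pos.le hδa
      have e1 : f1 i = a i * ((2:ℝ)^i)⁻¹ * (g (x i) - g (y i)) := by
        simp only [hf1, if_pos hlt, if_neg (asymm hlt)]; ring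
      have e2 : f2 i = φ i (x i) * (Hdist (jumpMap W i x) (jumpMap W i y) - Hdist x y) := by
        simp only [hf2]; rw [min_eq_left hφle]
      have e3 : f3 i = 0 := by
        simp only [hf3]; rw [max_eq_right (by linarith : φ i (x i) - φ i (y i) ≤ 0)]; ring
      have e4 : f4 i = (φ i (y i) - φ i (x i)) * (Hdist x (jumpMap W i y) - Hdist x y) := by
        simp only [hf4]; rw [max_eq_left (by linarith : (0:ℝ) ≤ φ i (y i) - φ i (x i))]
      rw [habs]
      linarith [key, e1, e2, e3, e4]
    · -- x i = y i
      have hA0 : f1 i ≤ 0 := by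
        simp only [hf1, if_neg (heq ▸ lt_irrefl (x i)), heq]
        nlinarith [mul_nonneg (mul_nonneg (ha i) hp.le) (hg_nonneg (y i) (hy i))]
      have hB0 : f2 i ≤ 0 := by
        simp only [hf2]
        have hmin0 : 0 ≤ min (φ i (x i)) (φ i (y i)) :=
          le_min (hφ_nonneg i (x i) (hx i)) (hφ_nonneg i (y i) (hy i))
        have hE0 : Hdist (jumpMap W i x) (jumpMap W i y) - Hdist x y ≤ 0 := by
          have : |x i - y i| = 0 := by rw [heq]; simp
          rw [this] at hEle; linarith [hEle, mul_nonneg hp.le (abs_nonneg (x i - y i))]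
        have := mul_le_mul_of_nonneg_left hE0 hmin0
        simpa using this
      have hC0 : f3 i = 0 := by
        simp only [hf3, heq]; simp
      have hD0 : f4 i = 0 := by
        simp only [hf4, heq]; simp
      have habs0 : |x i - y i| = 0 := by rw [heq]; simp
      rw [hC0, hD0, habs0]
      have : -(k₁ * δ) * (((2:ℝ)^i)⁻¹ * 0) = 0 := by ring
      rw [this]
      linarith
    · -- y i < x i
      have hφle : φ i (y i) ≤ φ i (x i) := hφ_mono i (hy i) (hx i) hgt.le
      have habs : |x i - y i| = x i - y i := abs_of_nonneg (by linarith)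
      have hE : Hdist (jumpMap W i x) (jumpMap W i y) - Hdist x y ≤ -(((2:ℝ)^i)⁻¹ * (x i - y i)) := by
        rw [habs] at hEle; linarith
      have hFle := jump_left_le W x y i (c i) hy hH (hΔy i) (hc_sum i) (hc i)
      have hF : Hdist (jumpMap W i x) y - Hdist x y
          ≤ ((2:ℝ)^i)⁻¹ * y i - ((2:ℝ)^i)⁻¹ * (x i - y i) + c i := by
        rw [habs] at hFle; linarith
      have key := key_scalar (((2:ℝ)^i)⁻¹) (c i) (a i) δ k₁ (y i) (x i)
        (φ i (y i)) (φ i (x i)) (g (y i)) (g (x i))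
        (Hdist (jumpMap W i x) (jumpMap W i y) - Hdist x y)
        (Hdist (jumpMap W i x) y - Hdist x y)
        hp hci0 hgt.le (hφ_nonneg i (y i) (hy i)) hφle hE hF
        (hW4 i (y i) (x i) (hy i) hgt.le) (hW2 i (y i) (x i) (hy i) hgt.le)
        (hW3 (y i) (x i) (hy i) hgt.le) hk₁ hδ_pos.le hδa
      have e1 : f1 i = a i * ((2:ℝ)^i)⁻¹ * (g (y i) - g (x i)) := by
        simp only [hf1, if_pos hgt, if_neg (asymm hgt)]; ring
      have e2 : f2 i = φ i (y i) * (Hdist (jumpMap W i x) (jumpMap W i y) - Hdist x y) := by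
        simp only [hf2]; rw [min_eq_right hφle]
      have e3 : f3 i = (φ i (x i) - φ i (y i)) * (Hdist (jumpMap W i x) y - Hdist x y) := by
        simp only [hf3]; rw [max_eq_left (by linarith : (0:ℝ) ≤ φ i (x i) - φ i (y i))]
      have e4 : f4 i = 0 := by
        simp only [hf4]; rw [max_eq_right (by linarith : φ i (y i) - φ i (x i) ≤ 0)]; ring
      rw [habs]
      linarith [key, e1, e2, e3, e4]
  -- sum up
  have hsum_rhs : Summable (fun i : ℕ => -(k₁ * δ) * (((2:ℝ)^i)⁻¹ * |x i - y i|)) :=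
    hH.mul_left _
  have hsumA : Summable (fun i => f1 i + f2 i + f3 i + f4 i) :=
    ((h1.add h2).add h3).add h4
  rw [← Summable.tsum_add h1 h2, ← Summable.tsum_add (h1.add h2) h3, ← Summable.tsum_add ((h1.add h2).add h3) h4]
  calc ∑' i, (f1 i + f2 i + f3 i + f4 i)
      ≤ ∑' i, -(k₁ * δ) * (((2:ℝ)^i)⁻¹ * |x i - y i|) := Summable.tsum_le_tsum hBdd hsumA hsum_rhs
    _ = -(k₁ * δ) * Hdist x y := by rw [tsum_mul_left]; rfl
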